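/- Let b, d ∈ ℝ and let f₁ be continuous on (0,∞). Let S₁ be a primitive on (0,∞) of the function s ↦ s^{b−1} f₁(s), and let R(w) = w^b/b if b ≠ 0 and R(w) = ln w if b = 0. If w : I → (0,∞) is a solution of equation (5.12) on an interval I, then the Painlevé function τ ↦ w(τ)^{b+1}/√(w(τ)² + w'(τ)²) − S₁(w(τ)) + d R(w(τ)) is constant on I. -/

import Mathlib

open Real Set Filter Topology

noncomputable section

/-- A solution of equation (5.12) on a set `I`, with derivative `w'`:
`(d/dτ)[w'/√(w² + w'²)] − b w/√(w² + w'²) + f₁(w) − d·sgn(w) = 0`,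
where `(w, w') ≠ (0, 0)` everywhere on `I`. -/
def Sol512On (b d : ℝ) (f₁ w w' : ℝ → ℝ) (I : Set ℝ) : Prop :=
  ContinuousOn w' I ∧
  (∀ τ ∈ I, HasDerivWithinAt w (w' τ) I τ) ∧
  (∀ τ ∈ I, (w τ, w' τ) ≠ (0, 0)) ∧
  ∃ F' : ℝ → ℝ,
    (∀ τ ∈ I, HasDerivWithinAt
      (fun s => w' s / Real.sqrt (w s ^ 2 + w' s ^ 2)) (F' τ) I τ) ∧
    (∀ τ ∈ I, F' τ - b * w τ / Real.sqrt (w τ ^ 2 + w' τ ^ 2) + f₁ (w τ)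
      - d * Real.sign (w τ) = 0)

/-- Conditions (3.8) on the nonlinearity `f₁`: odd, continuous on `[0,∞)`,
`f₁(s)/s → 1` as `s → 0⁺`, `f₁(s) → ∞` as `s → ∞`, strictly increasing on `(0,∞)`. -/
def Cond38 (f₁ : ℝ → ℝ) : Prop :=
  (∀ s, f₁ (-s) = -f₁ s) ∧ ContinuousOn f₁ (Ici 0) ∧
  Tendsto (fun s => f₁ s / s) (𝓝[>] (0:ℝ)) (𝓝 1) ∧
  Tendsto f₁ atTop atTop ∧
  StrictMonoOn f₁ (Ioi 0)

/-- A function taking both positive and negative values. -/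
def SignChanging (ω : ℝ → ℝ) : Prop := (∃ σ, 0 < ω σ) ∧ (∃ σ, ω σ < 0)

/-- `T` is the least period of `ω`. -/
def IsLeastPeriod (ω : ℝ → ℝ) (T : ℝ) : Prop :=
  0 < T ∧ Function.Periodic ω T ∧ ∀ T', 0 < T' → Function.Periodic ω T' → T ≤ T'

theorem statement15 (b d : ℝ) (f₁ : ℝ → ℝ) (hf₁ : ContinuousOn f₁ (Ioi 0))
    (S₁ : ℝ → ℝ) (hS₁ : ∀ s ∈ Ioi (0:ℝ), HasDerivAt S₁ (s ^ (b - 1) * f₁ s) s)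
    (R : ℝ → ℝ)
    (hRb : b ≠ 0 → ∀ w ∈ Ioi (0:ℝ), R w = w ^ b / b)
    (hR0 : b = 0 → ∀ w ∈ Ioi (0:ℝ), R w = Real.log w)
    (w w' : ℝ → ℝ) (I : Set ℝ) (hI : I.OrdConnected)
    (hpos : ∀ τ ∈ I, 0 < w τ)
    (hw : Sol512On b d f₁ w w' I) :
    ∀ τ₁ ∈ I, ∀ τ₂ ∈ I,
      w τ₁ ^ (b + 1) / Real.sqrt (w τ₁ ^ 2 + w' τ₁ ^ 2) - S₁ (w τ₁) + d * R (w τ₁) =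
      w τ₂ ^ (b + 1) / Real.sqrt (w τ₂ ^ 2 + w' τ₂ ^ 2) - S₁ (w τ₂) + d * R (w τ₂) := by
  obtain ⟨hw'cont, hwd, hne, F', hF', heq⟩ := hw
  set r : ℝ → ℝ := fun s => Real.sqrt (w s ^ 2 + w' s ^ 2) with hr_def
  have hrpos : ∀ s ∈ I, 0 < r s := by
    intro s hs
    have h := hpos s hs
    have : 0 < w s ^ 2 + w' s ^ 2 := by positivity
    exact Real.sqrt_pos.mpr this
  have hrsq : ∀ s ∈ I, r s ^ 2 = w s ^ 2 + w' s ^ 2 := by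
    intro s hs
    have h := hpos s hs
    exact Real.sq_sqrt (by positivity)
  -- G s = w s / r s equals √(1 - F s ^ 2) on I
  have hGeq : ∀ s ∈ I, w s / r s = Real.sqrt (1 - (w' s / r s) ^ 2) := by
    intro s hs
    have hrs := hrpos s hs
    have hws := hpos s hs
    have h1 : 1 - (w' s / r s) ^ 2 = (w s / r s) ^ 2 := by
      have h2 := hrsq s hs
      field_simp
      linarith
    rw [h1, Real.sqrt_sq (by positivity)]
  set P : ℝ → ℝ := fun s => w s ^ (b + 1) / r s - S₁ (w s) + d * R (w s) with hP_def
  have key : ∀ τ ∈ I, HasDerivWithinAt P 0 I τ := by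
    intro τ hτ
    have ha : 0 < w τ := hpos τ hτ
    have hra : 0 < r τ := hrpos τ hτ
    have hwdτ := hwd τ hτ
    have hFτ := hF' τ hτ
    -- derivative of G = w/r
    have hsqF : HasDerivWithinAt (fun s => 1 - (w' s / r s) ^ 2)
        (0 - 2 * (w' τ / r τ) ^ 1 * F' τ) I τ :=
      (hasDerivWithinAt_const τ I (1:ℝ)).sub (hFτ.pow 2)
    have hGa : (1:ℝ) - (w' τ / r τ) ^ 2 ≠ 0 := by
      have := hGeq τ hτ
      intro h0
      rw [h0, Real.sqrt_zero] at this
      exact absurd this (by positivity)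
    have hG : HasDerivWithinAt (fun s => w s / r s)
        ((0 - 2 * (w' τ / r τ) ^ 1 * F' τ) / (2 * (w τ / r τ))) I τ := by
      rw [hGeq τ hτ]
      exact (hsqF.sqrt hGa).congr (fun s hs => hGeq s hs) (hGeq τ hτ)
    -- derivative of w^b
    have hwb : HasDerivWithinAt (fun s => w s ^ b) (w' τ * b * w τ ^ (b - 1)) I τ :=
      hwdτ.rpow_const (Or.inl (ne_of_gt ha))
    -- term A: w^(b+1)/r = w^b * (w/r)
    have hAeq : ∀ s ∈ I, w s ^ (b + 1) / r s = w s ^ b * (w s / r s) := by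
      intro s hs
      rw [Real.rpow_add_one (ne_of_gt (hpos s hs)), mul_div_assoc]
    have hA : HasDerivWithinAt (fun s => w s ^ (b + 1) / r s)
        (w' τ * b * w τ ^ (b - 1) * (w τ / r τ) +
          w τ ^ b * ((0 - 2 * (w' τ / r τ) ^ 1 * F' τ) / (2 * (w τ / r τ)))) I τ :=
      (hwb.mul hG).congr hAeq (hAeq τ hτ)
    -- term B
    have hB : HasDerivWithinAt (fun s => S₁ (w s)) (w τ ^ (b - 1) * f₁ (w τ) * w' τ) I τ :=
      (hS₁ (w τ) ha).comp_hasDerivWithinAt τ hwdτ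
    -- term C
    have hC : HasDerivWithinAt (fun s => R (w s)) (w τ ^ (b - 1) * w' τ) I τ := by
      rcases eq_or_ne b 0 with hb0 | hb0
      · have hRe := hR0 hb0
        have hlog : HasDerivWithinAt (fun s => Real.log (w s)) (w' τ / w τ) I τ :=
          hwdτ.log (ne_of_gt ha)
        have : w τ ^ (b - 1) * w' τ = w' τ / w τ := by
          rw [hb0]
          rw [show (0:ℝ) - 1 = -1 by ring, Real.rpow_neg_one]
          field_simp
        rw [this]
        exact hlog.congr (fun s hs => (hRe (w s) (hpos s hs)).symm ▸ rfl)
          ((hRe (w τ) ha).symm ▸ rfl)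
      · have hRe := hRb hb0
        have hpow : HasDerivWithinAt (fun s => w s ^ b / b)
            (w' τ * b * w τ ^ (b - 1) / b) I τ := hwb.div_const b
        have : w τ ^ (b - 1) * w' τ = w' τ * b * w τ ^ (b - 1) / b := by
          field_simp
        rw [this]
        exact hpow.congr (fun s hs => (hRe (w s) (hpos s hs)).symm ▸ rfl)
          ((hRe (w τ) ha).symm ▸ rfl)
    have hsum : HasDerivWithinAt P
        ((w' τ * b * w τ ^ (b - 1) * (w τ / r τ) +
          w τ ^ b * ((0 - 2 * (w' τ / r τ) ^ 1 * F' τ) / (2 * (w τ / r τ)))) -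
          w τ ^ (b - 1) * f₁ (w τ) * w' τ + d * (w τ ^ (b - 1) * w' τ)) I τ :=
      (hA.sub hB).add (hC.const_mul d)
    -- show the derivative is zero
    have hsign : Real.sign (w τ) = 1 := Real.sign_of_pos ha
    have hFval : F' τ = b * w τ / r τ - f₁ (w τ) + d := by
      have := heq τ hτ
      rw [hsign] at this
      linarith
    have hab : w τ ^ b = w τ ^ (b - 1) * w τ := by
      rw [← Real.rpow_add_one (ne_of_gt ha)]
      ring_nf
    have hzero : (w' τ * b * w τ ^ (b - 1) * (w τ / r τ) +
          w τ ^ b * ((0 - 2 * (w' τ / r τ) ^ 1 * F' τ) / (2 * (w τ / r τ)))) -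
          w τ ^ (b - 1) * f₁ (w τ) * w' τ + d * (w τ ^ (b - 1) * w' τ) = 0 := by
      rw [hab, hFval]
      field_simp
      ring
    rwa [hzero] at hsum
  -- conclude constancy
  intro τ₁ h₁ τ₂ h₂
  have hconv : Convex ℝ I := convex_iff_ordConnected.mpr hI
  have hle := hconv.norm_image_sub_le_of_norm_hasDerivWithin_le (f' := fun _ => (0:ℝ))
    key (fun x _ => le_of_eq norm_zero) h₁ h₂
  rw [zero_mul] at hle
  have h0 : P τ₂ = P τ₁ :=
    sub_eq_zero.mp (norm_eq_zero.mp (le_antisymm hle (norm_nonneg _)))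
  simpa only [hP_def, hr_def] using h0.symm
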